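/- Let H be a simple graph, let π = (d_1, …, d_n) be a sequence of nonnegative integers with d_1 ≥ … ≥ d_n, n ≥ 2, and 1 ≤ d_n ≤ n − 1, and let π′ be the residual sequence obtained by laying off d_n from π, i.e., the nonincreasing rearrangement of the (n−1)-term sequence (d_1 − 1, …, d_{d_n} − 1, d_{d_n + 1}, …, d_{n−1}). If π′ is potentially H-graphic, then π is potentially H-graphic. -/

import Mathlib

/-- `π` is the degree sequence (as a multiset) of the simple graph `G`. -/
def IsDegSeqOf {V : Type} [Fintype V] (G : SimpleGraph V) (π : List ℕ) : Prop :=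
  Multiset.map (fun v => (G.neighborSet v).ncard) Finset.univ.val = (π : Multiset ℕ)

/-- `π` is graphic: it is realized by some simple graph on `π.length` vertices. -/
def IsGraphic (π : List ℕ) : Prop :=
  ∃ G : SimpleGraph (Fin π.length), IsDegSeqOf G π

/-- `π` is potentially `H`-graphic: some realization of `π` contains a copy of `H`
as a subgraph (an injective graph homomorphism from `H`). -/
def PotentiallyGraphic {W : Type} (H : SimpleGraph W) (π : List ℕ) : Prop :=
  ∃ G : SimpleGraph (Fin π.length), IsDegSeqOf G π ∧ ∃ f : H →g G, Function.Injective f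

/-- The complete bipartite graph `K_{3,3}`. -/
def K33 : SimpleGraph (Fin 3 ⊕ Fin 3) := completeBipartiteGraph (Fin 3) (Fin 3)

/-- `K_6 − C_6`, the complement of the 6-cycle. -/
def K6mC6 : SimpleGraph (Fin 6) := (SimpleGraph.cycleGraph 6)ᶜ

lemma map_split {α β : Type*} (f : α → β) (t₁ : Multiset β) :
    ∀ (t₂ : Multiset β) (s : Multiset α), s.map f = t₁ + t₂ →
      ∃ s₁ s₂, s = s₁ + s₂ ∧ s₁.map f = t₁ ∧ s₂.map f = t₂ := by
  induction t₁ using Multiset.induction_on with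
  | empty => intro t₂ s h; exact ⟨0, s, by simp, by simp, by simpa using h⟩
  | cons b t₁ ih =>
    intro t₂ s h
    have hb : b ∈ s.map f := by rw [h]; simp
    obtain ⟨a, ha, hfa⟩ := Multiset.mem_map.1 hb
    obtain ⟨s', rfl⟩ := Multiset.exists_cons_of_mem ha
    rw [Multiset.map_cons, hfa, Multiset.cons_add, Multiset.cons_inj_right] at h
    obtain ⟨s₁, s₂, rfl, h1, h2⟩ := ih t₂ s' h
    exact ⟨a ::ₘ s₁, s₂, by rw [Multiset.cons_add], by rw [Multiset.map_cons, hfa, h1], h2⟩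

/-- Extend a graph by a new vertex (`none`) joined to the vertices of `S`. -/
def extGraph {m : ℕ} (G : SimpleGraph (Fin m)) (S : Finset (Fin m)) :
    SimpleGraph (Option (Fin m)) where
  Adj x y :=
    match x, y with
    | some a, some b => G.Adj a b
    | some a, none => a ∈ S
    | none, some b => b ∈ S
    | none, none => False
  symm := ⟨by rintro (_|a) (_|b) h <;> simp_all; exact h.symm⟩
  loopless := ⟨by rintro (_|a) h; · simp_all
                  · exact G.loopless.irrefl a h⟩

lemma extGraph_nbhd_some {m : ℕ} (G : SimpleGraph (Fin m)) (S : Finset (Fin m)) (a : Fin m) :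
    (extGraph G S).neighborSet (some a) =
      (some '' G.neighborSet a) ∪ (if a ∈ S then {none} else ∅) := by
  ext (_|b) <;> simp [extGraph, SimpleGraph.neighborSet] <;> split <;> simp_all

lemma extGraph_deg_some {m : ℕ} (G : SimpleGraph (Fin m)) (S : Finset (Fin m)) (a : Fin m) :
    ((extGraph G S).neighborSet (some a)).ncard =
      (G.neighborSet a).ncard + (if a ∈ S then 1 else 0) := by
  rw [extGraph_nbhd_some]
  rw [Set.ncard_union_eq ?_ (Set.toFinite _) (Set.toFinite _)]
  · congr 1
    · exact Set.ncard_image_of_injective _ (Option.some_injective _)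
    · split <;> simp
  · split <;> simp

lemma extGraph_deg_none {m : ℕ} (G : SimpleGraph (Fin m)) (S : Finset (Fin m)) :
    ((extGraph G S).neighborSet none).ncard = S.card := by
  have : (extGraph G S).neighborSet none = some '' ↑S := by
    ext (_|b) <;> simp [extGraph, SimpleGraph.neighborSet]
  rw [this, Set.ncard_image_of_injective _ (Option.some_injective _)]
  simp

lemma univ_option_val {α : Type*} [Fintype α] [DecidableEq α] :
    (Finset.univ : Finset (Option α)).val =
      none ::ₘ (Finset.univ : Finset α).val.map some := by
  rw [univ_option]
  rfl

/-- Corollary 2.6: if the residual sequence `π'` obtained by laying off the last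
(smallest) term `dₙ` from `π` is potentially `H`-graphic, then so is `π`.
Here `π'` is the nonincreasing rearrangement of
`(d₁ − 1, …, d_{dₙ} − 1, d_{dₙ+1}, …, d_{n−1})`, with `dₙ = π.getD (n−1) 0`. -/
theorem potentially_of_layoff {W : Type} (H : SimpleGraph W)
    (n : ℕ) (hn : 2 ≤ n) (π π' : List ℕ) (hlen : π.length = n)
    (hsorted : π.Pairwise (· ≥ ·))
    (hdn1 : 1 ≤ π.getD (n - 1) 0) (hdn2 : π.getD (n - 1) 0 ≤ n - 1)
    (hsorted' : π'.Pairwise (· ≥ ·))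
    (hperm : π'.Perm
      (((π.dropLast.take (π.getD (n - 1) 0)).map (· - 1)) ++
        π.dropLast.drop (π.getD (n - 1) 0)))
    (hpot : PotentiallyGraphic H π') :
    PotentiallyGraphic H π := by
  classical
  obtain ⟨G', hdeg, f, hf⟩ := hpot
  set d := π.getD (n - 1) 0 with hd
  set L := π.dropLast with hL
  set A : List ℕ := (L.take d).map (· - 1) with hA
  set B : List ℕ := L.drop d with hB
  have hπne : π ≠ [] := by
    intro h; rw [h] at hlen; simp at hlen; omega
  have hLlen : L.length = n - 1 := by rw [hL, List.length_dropLast, hlen]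
  have hAlen : A.length = d := by
    rw [hA, List.length_map, List.length_take, hLlen]; omega
  have hm : π'.length = n - 1 := by
    have := hperm.length_eq
    rw [List.length_append, hAlen, hB, List.length_drop, hLlen] at this
    omega
  -- every element of π is ≥ d
  have hmin : ∀ x ∈ π, d ≤ x := by
    intro x hx
    obtain ⟨i, hi, rfl⟩ := List.mem_iff_getElem.1 hx
    have hd' : d = π[n-1]'(by omega) := by
      rw [hd, List.getD_eq_getElem _ _ (by omega)]
    rw [hd']
    have := hsorted.rel_get_of_le (a := ⟨i, hi⟩) (b := ⟨n-1, by omega⟩)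
      (by simp; omega)
    simpa using this
  -- split the vertex multiset of G'
  have hdeg' : Multiset.map (fun v => (G'.neighborSet v).ncard) Finset.univ.val
      = (A : Multiset ℕ) + (B : Multiset ℕ) := by
    rw [hdeg, Multiset.coe_eq_coe.2 hperm]; rfl
  obtain ⟨s, t, hst, hs, ht⟩ := map_split _ _ _ _ hdeg'
  have hnodup : (s + t).Nodup := by rw [← hst]; exact Finset.univ.nodup
  have hdisj : Disjoint s t := (Multiset.nodup_add.1 hnodup).2.2
  set S : Finset (Fin π'.length) := s.toFinset with hS
  have hmemS : ∀ a, a ∈ S ↔ a ∈ s := fun a => Multiset.mem_toFinset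
  have hScard : S.card = d := by
    rw [hS, Multiset.toFinset_card_of_nodup (Multiset.nodup_add.1 hnodup).1]
    have : (Multiset.map (fun v => (G'.neighborSet v).ncard) s).card = s.card :=
      Multiset.card_map _ _
    rw [hs] at this
    simpa [hAlen] using this.symm
  -- the extended graph
  set G2 := extGraph G' S with hG2
  -- its degree multiset is π (up to the cons)
  have hG2deg : Multiset.map (fun v => (G2.neighborSet v).ncard) Finset.univ.val
      = (π : Multiset ℕ) := by
    rw [univ_option_val, Multiset.map_cons, Multiset.map_map]
    have hnone : (G2.neighborSet none).ncard = d := by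
      rw [hG2, extGraph_deg_none, hScard]
    rw [hnone]
    have hsome : Multiset.map ((fun v => (G2.neighborSet v).ncard) ∘ some)
        Finset.univ.val = (L : Multiset ℕ) := by
      rw [hst, Multiset.map_add]
      have h1 : Multiset.map ((fun v => (G2.neighborSet v).ncard) ∘ some) s
          = ((L.take d : List ℕ) : Multiset ℕ) := by
        have : Multiset.map ((fun v => (G2.neighborSet v).ncard) ∘ some) s
            = Multiset.map (fun a => (G'.neighborSet a).ncard + 1) s := by
          apply Multiset.map_congr rfl
          intro a ha
          simp only [Function.comp_apply, hG2, extGraph_deg_some]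
          rw [if_pos ((hmemS a).2 ha)]
        rw [this]
        have hmm : Multiset.map (fun a => (G'.neighborSet a).ncard + 1) s
            = Multiset.map (fun x => x + 1)
                (Multiset.map (fun a => (G'.neighborSet a).ncard) s) := by
          rw [Multiset.map_map]; rfl
        rw [hmm, hs]
        have : (A.map (· + 1) : List ℕ) = L.take d := by
          rw [hA, List.map_map]
          have : ∀ x ∈ L.take d, ((· + 1) ∘ (· - 1)) x = x := by
            intro x hx
            have hx' : x ∈ π := by
              have := List.mem_of_mem_take hx
              exact List.dropLast_subset _ (hL ▸ this)
            have := hmin x hx'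
            simp only [Function.comp_apply]; omega
          rw [List.map_congr_left this]
          exact List.map_id _
        rw [← this]
        exact Multiset.map_coe _ _
      have h2 : Multiset.map ((fun v => (G2.neighborSet v).ncard) ∘ some) t
          = ((B : List ℕ) : Multiset ℕ) := by
        have : Multiset.map ((fun v => (G2.neighborSet v).ncard) ∘ some) t
            = Multiset.map (fun a => (G'.neighborSet a).ncard) t := by
          apply Multiset.map_congr rfl
          intro a ha
          simp only [Function.comp_apply, hG2, extGraph_deg_some]
          rw [if_neg (fun hc => Multiset.disjoint_left.1 hdisj ((hmemS a).1 hc) ha)]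
          omega
        rw [this, ht]
      rw [h1, h2]
      have : (L.take d) ++ (L.drop d) = L := List.take_append_drop d L
      calc ((L.take d : List ℕ) : Multiset ℕ) + (B : Multiset ℕ)
          = ((L.take d ++ B : List ℕ) : Multiset ℕ) := rfl
        _ = (L : Multiset ℕ) := by rw [hB, this]
    rw [hsome]
    have hlast : π.getLast hπne = d := by
      rw [hd, List.getLast_eq_getElem, List.getD_eq_getElem _ _ (by omega)]
      congr 1; omega
    calc (d ::ₘ (L : Multiset ℕ)) = ((d :: L : List ℕ) : Multiset ℕ) := rfl
      _ = ((L ++ [d] : List ℕ) : Multiset ℕ) :=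
          Multiset.coe_eq_coe.2 (List.perm_append_singleton d L).symm
      _ = (π : Multiset ℕ) := by
          rw [hL, ← hlast, List.dropLast_append_getLast hπne]
  -- transfer to Fin π.length
  have hlen' : π.length = π'.length + 1 := by rw [hlen, hm]; omega
  let e : Fin π.length ≃ Option (Fin π'.length) :=
    (finCongr hlen').trans (finSuccEquiv π'.length)
  refine ⟨G2.comap e, ?_, ?_⟩
  · have hnb : ∀ v, ((G2.comap e).neighborSet v).ncard
        = (G2.neighborSet (e v)).ncard := by
      intro v
      have : (G2.comap e).neighborSet v = e.symm '' (G2.neighborSet (e v)) := by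
        ext w
        constructor
        · intro h
          exact ⟨e w, h, e.symm_apply_apply w⟩
        · rintro ⟨x, hx, rfl⟩
          show G2.Adj (e v) (e (e.symm x))
          simpa using hx
      rw [this, Set.ncard_image_of_injective _ e.symm.injective]
    unfold IsDegSeqOf
    calc Multiset.map (fun v => ((G2.comap e).neighborSet v).ncard) Finset.univ.val
        = Multiset.map (fun v => (G2.neighborSet (e v)).ncard) Finset.univ.val := by
          exact Multiset.map_congr rfl (fun v _ => hnb v)
      _ = Multiset.map (fun v => (G2.neighborSet v).ncard)
            (Finset.univ.val.map e) := by rw [Multiset.map_map]; rfl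
      _ = (π : Multiset ℕ) := by rw [Multiset.map_univ_val_equiv]; exact hG2deg
  · refine ⟨⟨fun w => e.symm (some (f w)), ?_⟩, ?_⟩
    · intro a b hab
      have h2 : G2.Adj (some (f a)) (some (f b)) := f.map_rel hab
      show G2.Adj (e (e.symm (some (f a)))) (e (e.symm (some (f b))))
      simpa using h2
    · intro a b hab
      exact hf (Option.some_injective _ (e.symm.injective hab))
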